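/- (Tian-type bound) Let 𝔽 be a field, F ∈ ℕ divisible by 3, and let W be a finite-dimensional 𝔽-vector space containing nine linearly independent subspaces A₁, A₂, A₃, B₁, B₂, B₃, C₁, C₂, C₃, each of dimension F/3; set W₁ = A₁ + A₂ + A₃, W₂ = B₁ + B₂ + B₃, W₃ = C₁ + C₂ + C₃. Let Z₁, Z₂, Z₃ and X be subspaces of W such that for each i ∈ {1,2,3}, the subspace X + Z_i contains W_i, A_i, B_i and C_i. Let M, R' be rationals with dim(Z_i) ≤ M·F for all i and dim(X) = R'·F. Then 2R' + 3M ≥ 5. -/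

import Mathlib

open Module
/-- A finite family of subspaces is linearly independent: whenever a sum of elements,
one from each subspace, is zero, every term is zero. -/
def SubspacesIndep {𝔽 V : Type*} [Field 𝔽] [AddCommGroup V] [Module 𝔽 V]
    {ι : Type*} [Fintype ι] (Us : ι → Submodule 𝔽 V) : Prop :=
  ∀ v : ι → V, (∀ i, v i ∈ Us i) → ∑ i, v i = 0 → ∀ i, v i = 0

lemma SubspacesIndep.iSupIndep' {𝔽 V : Type*} [Field 𝔽] [AddCommGroup V] [Module 𝔽 V]
    {ι : Type*} [Fintype ι] [DecidableEq ι] {Us : ι → Submodule 𝔽 V}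
    (h : SubspacesIndep Us) : iSupIndep Us := by
  classical
  apply iSupIndep_of_dfinsupp_lsum_injective
  rw [← LinearMap.ker_eq_bot, LinearMap.ker_eq_bot']
  intro v hv
  have hsum : ∑ i, ((v i : V)) = 0 := by
    rw [DFinsupp.lsum_apply_apply, DFinsupp.sumAddHom_apply,
      DFinsupp.sum_eq_sum_fintype] at hv
    · simpa using hv
    · intro i; simp
  have hz := h (fun i => (v i : V)) (fun i => (v i).2) hsum
  ext i
  simpa using congrArg Subtype.val (Subtype.ext (hz i) : v i = 0)

lemma finrank_biSup_of_iSupIndep {𝔽 V : Type*} [Field 𝔽] [AddCommGroup V] [Module 𝔽 V]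
    [FiniteDimensional 𝔽 V] {ι : Type*} [DecidableEq ι] {Us : ι → Submodule 𝔽 V}
    (h : iSupIndep Us) (s : Finset ι) :
    finrank 𝔽 ↥(⨆ i ∈ s, Us i) = ∑ i ∈ s, finrank 𝔽 ↥(Us i) := by
  induction s using Finset.induction with
  | empty => simp
  | @insert a s ha ih =>
    have hd : Disjoint (Us a) (⨆ i ∈ s, Us i) := by
      have := h.disjoint_biSup (y := (↑s : Set ι)) (by simpa using ha)
      simpa using this
    rw [Finset.sum_insert ha, ← ih, Finset.iSup_insert,
      ← Submodule.finrank_sup_add_finrank_inf_eq, hd.eq_bot, finrank_bot, add_zero]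

lemma indep_card_le {𝔽 V : Type*} [Field 𝔽] [AddCommGroup V] [Module 𝔽 V]
    [FiniteDimensional 𝔽 V] {ι : Type*} [DecidableEq ι] {Us : ι → Submodule 𝔽 V}
    (h : iSupIndep Us) (s : Finset ι) (n : ℕ) (hn : ∀ i ∈ s, finrank 𝔽 ↥(Us i) = n)
    (T : Submodule 𝔽 V) (hT : ∀ i ∈ s, Us i ≤ T) :
    s.card * n ≤ finrank 𝔽 ↥T := by
  calc s.card * n = ∑ i ∈ s, finrank 𝔽 ↥(Us i) := by
        rw [Finset.sum_congr rfl hn, Finset.sum_const, smul_eq_mul]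
    _ = finrank 𝔽 ↥(⨆ i ∈ s, Us i) := (finrank_biSup_of_iSupIndep h s).symm
    _ ≤ finrank 𝔽 ↥T := Submodule.finrank_mono (iSup₂_le hT)

/-- **Tian-type bound.** Let `F > 0` be divisible by 3 and let `W` be a
finite-dimensional `𝔽`-vector space containing nine linearly independent subspaces
`A₁, A₂, A₃, B₁, B₂, B₃, C₁, C₂, C₃`, each of dimension `F/3`; set
`W₁ = A₁ + A₂ + A₃`, `W₂ = B₁ + B₂ + B₃`, `W₃ = C₁ + C₂ + C₃`. Let `Z₁, Z₂, Z₃, X` be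
subspaces of `W` such that for each `i`, `X + Z_i` contains `W_i`, `A_i`, `B_i`, `C_i`.
If `dim Z_i ≤ M·F` for all `i` and `dim X = R'·F`, then `2R' + 3M ≥ 5`. -/
theorem tian_type_bound {𝔽 W : Type*} [Field 𝔽] [AddCommGroup W] [Module 𝔽 W]
    [FiniteDimensional 𝔽 W] (F : ℕ) (hF : 0 < F) (hF3 : 3 ∣ F)
    (A B C : Fin 3 → Submodule 𝔽 W)
    (hindep : SubspacesIndep (fun p : Fin 3 × Fin 3 => ![A, B, C] p.1 p.2))
    (hdimA : ∀ i, Module.finrank 𝔽 ↥(A i) = F / 3)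
    (hdimB : ∀ i, Module.finrank 𝔽 ↥(B i) = F / 3)
    (hdimC : ∀ i, Module.finrank 𝔽 ↥(C i) = F / 3)
    (Z : Fin 3 → Submodule 𝔽 W) (X : Submodule 𝔽 W)
    (hdecode : ∀ i : Fin 3,
      (![⨆ j, A j, ⨆ j, B j, ⨆ j, C j] : Fin 3 → Submodule 𝔽 W) i ≤ X ⊔ Z i ∧
      A i ≤ X ⊔ Z i ∧ B i ≤ X ⊔ Z i ∧ C i ≤ X ⊔ Z i)
    (M R' : ℚ)
    (hM : ∀ i, (Module.finrank 𝔽 ↥(Z i) : ℚ) ≤ M * F)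
    (hR : (Module.finrank 𝔽 ↥X : ℚ) = R' * F) :
    2 * R' + 3 * M ≥ 5 := by
  classical
  obtain ⟨n, hFn⟩ := hF3
  simp only [hFn, Nat.mul_div_cancel_left n (by norm_num : (0:ℕ) < 3)] at hdimA hdimB hdimC
  have hind : iSupIndep (fun p : Fin 3 × Fin 3 => ![A, B, C] p.1 p.2) :=
    hindep.iSupIndep'
  have hUdim : ∀ p : Fin 3 × Fin 3, finrank 𝔽 ↥((fun p : Fin 3 × Fin 3 => ![A, B, C] p.1 p.2) p) = n := by
    rintro ⟨i, j⟩
    fin_cases i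
    · exact hdimA j
    · exact hdimB j
    · exact hdimC j
  have hAsup : (⨆ j, A j) ≤ X ⊔ Z 0 := (hdecode 0).1
  have hBsup : (⨆ j, B j) ≤ X ⊔ Z 1 := (hdecode 1).1
  have hCsup : (⨆ j, C j) ≤ X ⊔ Z 2 := (hdecode 2).1
  have hA0 : ∀ j, A j ≤ X ⊔ Z 0 := fun j => (le_iSup A j).trans hAsup
  have hB1 : ∀ j, B j ≤ X ⊔ Z 1 := fun j => (le_iSup B j).trans hBsup
  have hC2 : ∀ j, C j ≤ X ⊔ Z 2 := fun j => (le_iSup C j).trans hCsup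
  have hA1Z1 : A 1 ≤ X ⊔ Z 1 := (hdecode 1).2.1
  have hA2Z2 : A 2 ≤ X ⊔ Z 2 := (hdecode 2).2.1
  have hB0Z0 : B 0 ≤ X ⊔ Z 0 := (hdecode 0).2.2.1
  have hB2Z2 : B 2 ≤ X ⊔ Z 2 := (hdecode 2).2.2.1
  have hC0Z0 : C 0 ≤ X ⊔ Z 0 := (hdecode 0).2.2.2
  have hC1Z1 : C 1 ≤ X ⊔ Z 1 := (hdecode 1).2.2.2
  -- Lower bound 1
  have hlb1 : 8 * n ≤ finrank 𝔽 ↥((X ⊔ Z 0) ⊔ (X ⊔ Z 1)) := by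
    have hcard : ({(0,0),(0,1),(0,2),(1,0),(1,1),(1,2),(2,0),(2,1)} :
        Finset (Fin 3 × Fin 3)).card = 8 := by decide
    have := indep_card_le hind
      ({(0,0),(0,1),(0,2),(1,0),(1,1),(1,2),(2,0),(2,1)} : Finset (Fin 3 × Fin 3)) n
      (fun p _ => hUdim p) ((X ⊔ Z 0) ⊔ (X ⊔ Z 1)) ?_
    · rwa [hcard] at this
    · intro p hp
      simp only [Finset.mem_insert, Finset.mem_singleton] at hp
      rcases hp with rfl|rfl|rfl|rfl|rfl|rfl|rfl|rfl
      · exact (hA0 0).trans le_sup_left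
      · exact (hA0 1).trans le_sup_left
      · exact (hA0 2).trans le_sup_left
      · exact (hB1 0).trans le_sup_right
      · exact (hB1 1).trans le_sup_right
      · exact (hB1 2).trans le_sup_right
      · exact hC0Z0.trans le_sup_left
      · exact hC1Z1.trans le_sup_right
  have hYle : X ⊔ A 1 ⊔ B 0 ≤ (X ⊔ Z 0) ⊓ (X ⊔ Z 1) :=
    le_inf (sup_le (sup_le le_sup_left (hA0 1)) hB0Z0)
      (sup_le (sup_le le_sup_left hA1Z1) (hB1 0))
  -- Lower bound 2
  have hlb2 : 7 * n ≤ finrank 𝔽 ↥((X ⊔ A 1 ⊔ B 0) ⊔ (X ⊔ Z 2)) := by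
    have hcard : ({(0,1),(0,2),(1,0),(1,2),(2,0),(2,1),(2,2)} :
        Finset (Fin 3 × Fin 3)).card = 7 := by decide
    have := indep_card_le hind
      ({(0,1),(0,2),(1,0),(1,2),(2,0),(2,1),(2,2)} : Finset (Fin 3 × Fin 3)) n
      (fun p _ => hUdim p) ((X ⊔ A 1 ⊔ B 0) ⊔ (X ⊔ Z 2)) ?_
    · rwa [hcard] at this
    · intro p hp
      simp only [Finset.mem_insert, Finset.mem_singleton] at hp
      rcases hp with rfl|rfl|rfl|rfl|rfl|rfl|rfl
      · exact le_sup_of_le_left (le_sup_of_le_left le_sup_right)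
      · exact hA2Z2.trans le_sup_right
      · exact le_sup_of_le_left le_sup_right
      · exact hB2Z2.trans le_sup_right
      · exact (hC2 0).trans le_sup_right
      · exact (hC2 1).trans le_sup_right
      · exact (hC2 2).trans le_sup_right
  have hXleY : X ≤ (X ⊔ A 1 ⊔ B 0) ⊓ (X ⊔ Z 2) :=
    le_inf (le_sup_of_le_left le_sup_left) le_sup_left
  have key1 : finrank 𝔽 ↥(X ⊔ Z 0) + finrank 𝔽 ↥(X ⊔ Z 1)
      ≥ 8 * n + finrank 𝔽 ↥(X ⊔ A 1 ⊔ B 0) := by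
    have heq := Submodule.finrank_sup_add_finrank_inf_eq (X ⊔ Z 0) (X ⊔ Z 1)
    have h2 := Submodule.finrank_mono hYle
    omega
  have key2 : finrank 𝔽 ↥(X ⊔ A 1 ⊔ B 0) + finrank 𝔽 ↥(X ⊔ Z 2)
      ≥ 7 * n + finrank 𝔽 ↥X := by
    have heq := Submodule.finrank_sup_add_finrank_inf_eq (X ⊔ A 1 ⊔ B 0) (X ⊔ Z 2)
    have h2 := Submodule.finrank_mono hXleY
    omega
  have hdle : ∀ i, finrank 𝔽 ↥(X ⊔ Z i) ≤ finrank 𝔽 ↥X + finrank 𝔽 ↥(Z i) := by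
    intro i
    have := Submodule.finrank_sup_add_finrank_inf_eq X (Z i)
    omega
  have main : 2 * finrank 𝔽 ↥X +
      (finrank 𝔽 ↥(Z 0) + finrank 𝔽 ↥(Z 1) + finrank 𝔽 ↥(Z 2)) ≥ 5 * F := by
    have h0 := hdle 0; have h1 := hdle 1; have h2 := hdle 2
    omega
  have hq : ((5 * F : ℕ) : ℚ) ≤ ((2 * finrank 𝔽 ↥X +
      (finrank 𝔽 ↥(Z 0) + finrank 𝔽 ↥(Z 1) + finrank 𝔽 ↥(Z 2)) : ℕ) : ℚ) := by
    exact_mod_cast main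
  push_cast at hq
  have hm0 := hM 0; have hm1 := hM 1; have hm2 := hM 2
  have hFq : (0 : ℚ) < F := by exact_mod_cast hF
  rw [ge_iff_le, ← mul_le_mul_iff_of_pos_right hFq]
  nlinarith [hq, hm0, hm1, hm2, hR]
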